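/- Let R be a nonnegative random variable, c > 0 and λ₁ > 0 such that −log E[e^{−λR}] ≥ c√λ for all λ ≥ λ₁. Then for every x with 0 < x ≤ c/(2√λ₁), one has P(R ≤ x) ≤ exp(−c²/(4x)). -/

import Mathlib

open MeasureTheory

/-- If −log E[e^{−λR}] ≥ c√λ for all λ ≥ λ₁, then for 0 < x ≤ c/(2√λ₁),
P(R ≤ x) ≤ exp(−c²/(4x)). -/
theorem stmt5 {Ω : Type*} [MeasurableSpace Ω] (P : Measure Ω) [IsProbabilityMeasure P]
    (R : Ω → ℝ) (hR : Measurable R) (hR0 : ∀ ω, 0 ≤ R ω)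
    (c l1 : ℝ) (hc : 0 < c) (hl1 : 0 < l1)
    (h : ∀ l : ℝ, l1 ≤ l → c * Real.sqrt l ≤ - Real.log (∫ ω, Real.exp (-(l * R ω)) ∂P)) :
    ∀ x : ℝ, 0 < x → x ≤ c / (2 * Real.sqrt l1) →
      (P {ω | R ω ≤ x}).toReal ≤ Real.exp (-(c ^ 2 / (4 * x))) := by
  intro x hx hxle
  set l : ℝ := c ^ 2 / (4 * x ^ 2) with hldef
  have hsl1 : 0 < Real.sqrt l1 := Real.sqrt_pos.mpr hl1
  have hcx : Real.sqrt l1 ≤ c / (2 * x) := by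
    rw [le_div_iff₀ (by positivity)]
    have := (le_div_iff₀ (by positivity)).mp hxle
    linarith [this]
  have hl1le : l1 ≤ l := by
    have h2 : l1 = Real.sqrt l1 ^ 2 := (Real.sq_sqrt hl1.le).symm
    have h3 : Real.sqrt l1 ^ 2 ≤ (c / (2 * x)) ^ 2 :=
      pow_le_pow_left₀ hsl1.le hcx 2
    have h4 : (c / (2 * x)) ^ 2 = c ^ 2 / (4 * x ^ 2) := by ring
    rw [h2]; rw [hldef]; rw [← h4]; exact h3
  have hlpos : 0 < l := lt_of_lt_of_le hl1 hl1le
  have hsqrtl : Real.sqrt l = c / (2 * x) := by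
    rw [hldef]
    have h4 : c ^ 2 / (4 * x ^ 2) = (c / (2 * x)) ^ 2 := by ring
    rw [h4, Real.sqrt_sq (by positivity)]
  have hInt : Integrable (fun ω => Real.exp (-(l * R ω))) P := by
    apply Integrable.mono' (integrable_const (1 : ℝ))
    · exact ((hR.const_mul l).neg.exp).aestronglyMeasurable
    · filter_upwards with ω
      rw [Real.norm_eq_abs, abs_of_pos (Real.exp_pos _)]
      exact Real.exp_le_one_iff.mpr (by nlinarith [hR0 ω, hlpos])
  set I : ℝ := ∫ ω, Real.exp (-(l * R ω)) ∂P with hIdef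
  set s : Set Ω := {ω | R ω ≤ x} with hsdef
  have hsm : MeasurableSet s := hR measurableSet_Iic
  have hlow : (P s).toReal * Real.exp (-(l * x)) ≤ I := by
    have h1 : ∫ ω in s, Real.exp (-(l * x)) ∂P ≤ ∫ ω in s, Real.exp (-(l * R ω)) ∂P := by
      apply setIntegral_mono_on (integrableOn_const (measure_lt_top P s).ne)
        hInt.integrableOn hsm
      intro ω hω
      exact Real.exp_le_exp.mpr (neg_le_neg (mul_le_mul_of_nonneg_left (show R ω ≤ x from hω) hlpos.le))
    have h2 : ∫ ω in s, Real.exp (-(l * R ω)) ∂P ≤ I :=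
      setIntegral_le_integral hInt (Filter.Eventually.of_forall fun ω => (Real.exp_pos _).le)
    have h3 : ∫ ω in s, Real.exp (-(l * x)) ∂P = (P s).toReal * Real.exp (-(l * x)) := by
      rw [setIntegral_const, smul_eq_mul, measureReal_def]
    linarith
  by_cases hzero : (P s).toReal = 0
  · rw [hzero]; exact (Real.exp_pos _).le
  have hPpos : 0 < (P s).toReal :=
    lt_of_le_of_ne ENNReal.toReal_nonneg (Ne.symm hzero)
  have hIpos : 0 < I := lt_of_lt_of_le (by positivity) hlow
  have hIle : I ≤ Real.exp (-(c * Real.sqrt l)) := by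
    have hh := h l hl1le
    rw [← hIdef] at hh
    have : Real.log I ≤ -(c * Real.sqrt l) := by linarith
    calc I = Real.exp (Real.log I) := (Real.exp_log hIpos).symm
    _ ≤ Real.exp (-(c * Real.sqrt l)) := Real.exp_le_exp.mpr this
  have key : (P s).toReal ≤ Real.exp (-(c * Real.sqrt l)) * Real.exp (l * x) := by
    have := mul_le_mul_of_nonneg_right (hlow.trans hIle) (Real.exp_pos (l * x)).le
    rw [mul_assoc, ← Real.exp_add, neg_add_cancel, Real.exp_zero, mul_one] at this
    exact this
  calc (P s).toReal ≤ Real.exp (-(c * Real.sqrt l)) * Real.exp (l * x) := key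
  _ = Real.exp (-(c * Real.sqrt l) + l * x) := (Real.exp_add _ _).symm
  _ = Real.exp (-(c ^ 2 / (4 * x))) := by
      congr 1
      rw [hsqrtl, hldef]
      field_simp
      ring
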